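/- (Uniform √n-consistency of the estimated weight, conditional form.) Let K ≥ 1, η > 0, and let 𝒫 be a nonempty set. For each P ∈ 𝒫 let H_P be a symmetric K×K real matrix with xᵀH_Px ≥ η‖x‖² for all x ∈ ℝ^K, let h_P ∈ ℝ^K, define M_P(w) := wᵀH_Pw − 2h_Pᵀw, and let w_P ∈ Δ be a minimizer of M_P over Δ. For each n ∈ ℕ and P ∈ 𝒫, let a probability space carry a random symmetric K×K matrix Ĥ_{n,P}, a random vector ĥ_{n,P} ∈ ℝ^K, and a Δ-valued random vector ŵ_{n,P} that almost surely minimizes M̂_{n,P}(w) := wᵀĤ_{n,P}w − 2ĥ_{n,P}ᵀw over Δ; write D_{n,P}(w) := M̂_{n,P}(w) − M_P(w). Assume: (a) for every ε > 0, lim_{n→∞} sup_{P∈𝒫} Pr_{n,P}( ‖ŵ_{n,P} − w_P‖ > ε ) = 0; and (b) for every sequence of positive reals δ_n → 0 and every ε > 0, there exists M > 0 such that limsup_{n→∞} sup_{P∈𝒫} Pr_{n,P}( sup_{w∈Δ, ‖w−w_P‖≤δ_n} |D_{n,P}(w) − D_{n,P}(w_P)| > M δ_n n^{−1/2} ) <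 ε. Then lim_{M→∞} limsup_{n→∞} sup_{P∈𝒫} Pr_{n,P}( √n ‖ŵ_{n,P} − w_P‖ > M ) = 0. -/

import Mathlib

open Matrix MeasureTheory Filter

set_option maxHeartbeats 1600000

/-- The simplex `Δ = {w ∈ ℝ^K : w_j ≥ 0 for all j, Σ_j w_j = 1}`. -/
def simplex (K : ℕ) : Set (Fin K → ℝ) :=
  {w | (∀ j, 0 ≤ w j) ∧ ∑ j, w j = 1}

/-- The Euclidean norm on `ℝ^K`. -/
noncomputable def euclidNorm {K : ℕ} (x : Fin K → ℝ) : ℝ :=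
  Real.sqrt (∑ j, (x j) ^ 2)

/-- Uniform `√n`-consistency of the estimated weight (conditional form). For each `P` in a
nonempty collection `𝒫`, `M_P(w) = wᵀH_Pw − 2h_Pᵀw` with `xᵀH_Px ≥ η‖x‖²` is minimized
over `Δ` at `w_P`; for each `n, P`, `ŵ_{n,P}` is a `Δ`-valued random vector almost surely
minimizing `M̂_{n,P}(w) = wᵀĤ_{n,P}w − 2ĥ_{n,P}ᵀw` over `Δ`, and `D_{n,P}(w) = M̂_{n,P}(w)
− M_P(w)`. If (a) `ŵ_{n,P}` is consistent for `w_P` uniformly in `P`, and (b) the usual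
uniform stochastic-equicontinuity bound holds (stated via: the supremum over
`{w ∈ Δ : ‖w − w_P‖ ≤ δ_n}` of `|D_{n,P}(w) − D_{n,P}(w_P)|` exceeds `Mδ_n n^{−1/2}` iff
some such `w` exceeds it), then
`lim_{M→∞} limsup_n sup_P Pr_{n,P}(√n‖ŵ_{n,P} − w_P‖ > M) = 0`. -/
theorem stmt19 {K : ℕ} (hK : 1 ≤ K) (η : ℝ) (hη : 0 < η)
    {P : Type*} [Nonempty P]
    (H : P → Matrix (Fin K) (Fin K) ℝ) (hHsymm : ∀ p, (H p).IsSymm)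
    (hHlb : ∀ p, ∀ x : Fin K → ℝ, η * ∑ j, (x j) ^ 2 ≤ x ⬝ᵥ (H p *ᵥ x))
    (h : P → Fin K → ℝ)
    (M : P → (Fin K → ℝ) → ℝ)
    (hM : ∀ p w, M p w = w ⬝ᵥ (H p *ᵥ w) - 2 * (h p ⬝ᵥ w))
    (wP : P → Fin K → ℝ) (hwP : ∀ p, wP p ∈ simplex K)
    (hwPmin : ∀ p, ∀ w ∈ simplex K, M p (wP p) ≤ M p w)
    {Ω' : Type*} [MeasurableSpace Ω']
    (μ : ℕ → P → Measure Ω') (hμ : ∀ n p, IsProbabilityMeasure (μ n p))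
    (Hhat : ℕ → P → Ω' → Matrix (Fin K) (Fin K) ℝ)
    (hHhatsymm : ∀ n p ω, (Hhat n p ω).IsSymm)
    (hHhatmeas : ∀ n p i j, Measurable (fun ω => Hhat n p ω i j))
    (hhat : ℕ → P → Ω' → (Fin K → ℝ))
    (hhhatmeas : ∀ n p, Measurable (hhat n p))
    (Mhat : ℕ → P → Ω' → (Fin K → ℝ) → ℝ)
    (hMhat : ∀ n p ω w,
      Mhat n p ω w = w ⬝ᵥ (Hhat n p ω *ᵥ w) - 2 * (hhat n p ω ⬝ᵥ w))
    (what : ℕ → P → Ω' → (Fin K → ℝ))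
    (hwhatmeas : ∀ n p, Measurable (what n p))
    (hwhatΔ : ∀ n p ω, what n p ω ∈ simplex K)
    (hwhatmin : ∀ n p, ∀ᵐ ω ∂(μ n p),
      ∀ w ∈ simplex K, Mhat n p ω (what n p ω) ≤ Mhat n p ω w)
    (ha : ∀ ε > (0 : ℝ),
      Tendsto (fun n => ⨆ p, μ n p {ω | ε < euclidNorm (what n p ω - wP p)})
        atTop (nhds 0))
    (hb : ∀ δ : ℕ → ℝ, (∀ n, 0 < δ n) → Tendsto δ atTop (nhds 0) →
      ∀ ε > (0 : ℝ), ∃ Mb > (0 : ℝ),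
        limsup (fun n => ⨆ p, μ n p {ω | ∃ w ∈ simplex K,
            euclidNorm (w - wP p) ≤ δ n ∧
            Mb * δ n / Real.sqrt n <
              |(Mhat n p ω w - M p w) - (Mhat n p ω (wP p) - M p (wP p))|})
          atTop < ENNReal.ofReal ε) :
    Tendsto (fun Mc : ℝ =>
        limsup (fun n => ⨆ p, μ n p
            {ω | Mc < Real.sqrt n * euclidNorm (what n p ω - wP p)})
          atTop)
      atTop (nhds 0) := by
  classical
  have key : ∀ ε : ℝ, 0 < ε → ∃ k : ℕ, 0 < k ∧
      ∀ᶠ n in atTop,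
        (⨆ p, μ n p {ω | (k : ℝ) < Real.sqrt n * euclidNorm (what n p ω - wP p)})
          ≤ ENNReal.ofReal ε := by
    intro ε hε
    have step1 : ∃ k : ℕ, 0 < k ∧ ∀ᶠ n in atTop,
        (⨆ p, μ n p {ω | ∃ w ∈ simplex K,
            euclidNorm (w - wP p) ≤ (k : ℝ) / Real.sqrt n ∧
            η * (k : ℝ) / 12 * ((k : ℝ) / Real.sqrt n) / Real.sqrt n <
              |(Mhat n p ω w - M p w) - (Mhat n p ω (wP p) - M p (wP p))|})
          < ENNReal.ofReal ε := by
      by_contra hcon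
      push_neg at hcon
      have hfreq : ∀ j : ℕ, ∃ᶠ n in atTop,
          (ENNReal.ofReal ε ≤
            (⨆ p, μ n p {ω | ∃ w ∈ simplex K,
              euclidNorm (w - wP p) ≤ ((j+1 : ℕ) : ℝ) / Real.sqrt n ∧
              η * ((j+1 : ℕ) : ℝ) / 12 * (((j+1 : ℕ) : ℝ) / Real.sqrt n) / Real.sqrt n <
                |(Mhat n p ω w - M p w) - (Mhat n p ω (wP p) - M p (wP p))|}))
            ∧ (((j+1 : ℕ) : ℝ))^2 ≤ Real.sqrt n := by
        intro j
        have h1 := hcon (j+1) (Nat.succ_pos j)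
        have h1' := h1.mono (fun n hn => hn)
        have h2 : ∀ᶠ n : ℕ in atTop, (((j+1 : ℕ) : ℝ))^2 ≤ Real.sqrt n := by
          filter_upwards [eventually_ge_atTop ((j+1)^4)] with n hn
          have hc : ((((j+1 : ℕ) : ℝ))^2)^2 ≤ (n : ℝ) := by
            have : (((j+1)^4 : ℕ) : ℝ) ≤ (n : ℝ) := by exact_mod_cast hn
            calc ((((j+1 : ℕ) : ℝ))^2)^2 = (((j+1)^4 : ℕ) : ℝ) := by push_cast; ring
            _ ≤ (n : ℝ) := this
          calc (((j+1 : ℕ) : ℝ))^2 = Real.sqrt (((((j+1 : ℕ) : ℝ))^2)^2) :=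
                (Real.sqrt_sq (by positivity)).symm
          _ ≤ Real.sqrt n := Real.sqrt_le_sqrt hc
        exact h1'.and_eventually h2
      obtain ⟨φ, hφmono, hφ⟩ := Filter.extraction_forall_of_frequently hfreq
      set δseq : ℕ → ℝ := fun n =>
        if hex : ∃ i, φ i = n then ((Classical.choose hex + 1 : ℕ) : ℝ) / Real.sqrt n
        else 1 / ((n : ℝ) + 1) with hδseq
      have hδat : ∀ j, δseq (φ j) = ((j+1 : ℕ) : ℝ) / Real.sqrt (φ j) := by
        intro j
        have hex : ∃ i, φ i = φ j := ⟨j, rfl⟩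
        have hcj : Classical.choose hex = j := hφmono.injective (Classical.choose_spec hex)
        simp only [hδseq, dif_pos hex, hcj]
      have hsqrtpos : ∀ j, (0:ℝ) < Real.sqrt (φ j) := by
        intro j
        exact lt_of_lt_of_le (by positivity) (hφ j).2
      have hδpos : ∀ n, 0 < δseq n := by
        intro n
        by_cases hex : ∃ i, φ i = n
        · have hspec := Classical.choose_spec hex
          simp only [hδseq, dif_pos hex]
          have := hsqrtpos (Classical.choose hex)
          rw [hspec] at this
          exact div_pos (by exact_mod_cast Nat.succ_pos _) this
        · simp only [hδseq, dif_neg hex]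
          positivity
      have hδ0 : Tendsto δseq atTop (nhds 0) := by
        rw [Metric.tendsto_atTop]
        intro ε' hε'
        obtain ⟨J, hJ⟩ := exists_nat_one_div_lt hε'
        refine ⟨max (φ J + 1) (J + 1), fun n hn => ?_⟩
        have hn1 : φ J < n := lt_of_lt_of_le (Nat.lt_succ_self _)
          (le_trans (le_max_left _ _) hn)
        have hn2 : J + 1 ≤ n := le_trans (le_max_right _ _) hn
        rw [Real.dist_eq, sub_zero, abs_of_pos (hδpos n)]
        by_cases hex : ∃ i, φ i = n
        · have hspec : φ (Classical.choose hex) = n := Classical.choose_spec hex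
          set i := Classical.choose hex with hi
          have hJi : J < i := by
            by_contra hle
            push_neg at hle
            have := hφmono.monotone hle
            omega
          have h2 := (hφ i).2
          rw [hspec] at h2
          have hsn : 0 < Real.sqrt n := lt_of_lt_of_le (by positivity) h2
          simp only [hδseq, dif_pos hex, ← hi]
          have hipos : (0:ℝ) < ((i+1 : ℕ) : ℝ) := by exact_mod_cast Nat.succ_pos _
          have hle1 : ((i+1 : ℕ) : ℝ) / Real.sqrt n ≤ 1 / ((i+1 : ℕ) : ℝ) := by
            rw [div_le_div_iff₀ hsn hipos]
            nlinarith [h2]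
          have hle2 : 1 / ((i+1 : ℕ) : ℝ) ≤ 1 / ((J : ℝ) + 1) := by
            apply one_div_le_one_div_of_le (by positivity)
            have hJi' : (J : ℝ) < (i : ℝ) := by exact_mod_cast hJi
            push_cast
            linarith
          exact lt_of_le_of_lt (le_trans hle1 hle2) hJ
        · simp only [hδseq, dif_neg hex]
          have hle : 1 / ((n : ℝ) + 1) ≤ 1 / ((J : ℝ) + 1) := by
            apply one_div_le_one_div_of_le (by positivity)
            have : ((J+1 : ℕ) : ℝ) ≤ ((n : ℕ) : ℝ) := by exact_mod_cast hn2
            push_cast at this ⊢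
            linarith
          exact lt_of_le_of_lt hle hJ
      obtain ⟨Mb, hMb0, hls⟩ := hb δseq hδpos hδ0 ε hε
      have hev2 := Filter.eventually_lt_of_limsup_lt hls
      rw [eventually_atTop] at hev2
      obtain ⟨N, hN⟩ := hev2
      set j := max (⌈12 * Mb / η⌉₊) N with hj
      have hφjN : N ≤ φ j := le_trans (le_max_right _ _) hφmono.le_apply
      have hG := hN (φ j) hφjN
      have hS := (hφ j).1
      have hMbj : Mb ≤ η * ((j+1 : ℕ) : ℝ) / 12 := by
        have h1 : 12 * Mb / η ≤ (⌈12 * Mb / η⌉₊ : ℝ) := Nat.le_ceil _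
        have h2 : ((⌈12 * Mb / η⌉₊ : ℕ) : ℝ) ≤ (j : ℝ) := by
          exact_mod_cast le_max_left (⌈12 * Mb / η⌉₊) N
        have h3 : 12 * Mb / η ≤ (j : ℝ) + 1 := by push_cast at h2 ⊢; linarith
        have h4 : 12 * Mb ≤ ((j : ℝ) + 1) * η := (div_le_iff₀ hη).mp h3
        have : ((j+1 : ℕ) : ℝ) = (j : ℝ) + 1 := by push_cast; ring
        rw [this]
        nlinarith
      have hsub : (⨆ p, μ (φ j) p {ω | ∃ w ∈ simplex K,
            euclidNorm (w - wP p) ≤ ((j+1 : ℕ) : ℝ) / Real.sqrt (φ j) ∧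
            η * ((j+1 : ℕ) : ℝ) / 12 * (((j+1 : ℕ) : ℝ) / Real.sqrt (φ j)) / Real.sqrt (φ j) <
              |(Mhat (φ j) p ω w - M p w) - (Mhat (φ j) p ω (wP p) - M p (wP p))|})
          ≤ (⨆ p, μ (φ j) p {ω | ∃ w ∈ simplex K,
            euclidNorm (w - wP p) ≤ δseq (φ j) ∧
            Mb * δseq (φ j) / Real.sqrt (φ j) <
              |(Mhat (φ j) p ω w - M p w) - (Mhat (φ j) p ω (wP p) - M p (wP p))|}) := by
        refine iSup_mono fun p => measure_mono ?_
        rintro ω ⟨w, hw, hwn, hwgt⟩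
        rw [hδat j]
        exact ⟨w, hw, hwn, lt_of_le_of_lt (by gcongr) hwgt⟩
      exact absurd hG (not_lt.2 (le_trans hS hsub))
    obtain ⟨k, hkpos, hev⟩ := step1
    refine ⟨k, hkpos, ?_⟩
    filter_upwards [hev, eventually_ge_atTop 1] with n hbadlt hn1
    refine le_trans (iSup_mono fun p => ?_) hbadlt.le
    have hnull : μ n p {ω | ¬ ∀ w ∈ simplex K,
        Mhat n p ω (what n p ω) ≤ Mhat n p ω w} = 0 := by
      have := hwhatmin n p
      rwa [MeasureTheory.ae_iff] at this
    have hsub : {ω | (k : ℝ) < Real.sqrt n * euclidNorm (what n p ω - wP p)} ⊆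
        {ω | ∃ w ∈ simplex K,
            euclidNorm (w - wP p) ≤ (k : ℝ) / Real.sqrt n ∧
            η * (k : ℝ) / 12 * ((k : ℝ) / Real.sqrt n) / Real.sqrt n <
              |(Mhat n p ω w - M p w) - (Mhat n p ω (wP p) - M p (wP p))|} ∪
        {ω | ¬ ∀ w ∈ simplex K, Mhat n p ω (what n p ω) ≤ Mhat n p ω w} := by
      intro ω hω
      by_cases hmin : ∀ w ∈ simplex K, Mhat n p ω (what n p ω) ≤ Mhat n p ω w
      swap
      · exact Or.inr hmin
      left
      by_contra hbad
      simp only [Set.mem_setOf_eq, not_exists, not_and, not_lt] at hbad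
      have hω' : (k : ℝ) < Real.sqrt n * euclidNorm (what n p ω - wP p) := hω
      -- deterministic core
      have hn0 : (0:ℝ) < Real.sqrt n := Real.sqrt_pos.2 (by exact_mod_cast hn1)
      set u : Fin K → ℝ := what n p ω - wP p with hu
      set r : ℝ := euclidNorm u with hrdef
      have hkpos' : (0:ℝ) < (k : ℝ) := by exact_mod_cast hkpos
      have hrpos : 0 < r := by
        rcases le_or_gt r 0 with hr | hr
        · nlinarith [hω', hn0]
        · exact hr
      set δ : ℝ := (k : ℝ) / Real.sqrt n with hδdef
      have hδpos : 0 < δ := div_pos hkpos' hn0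
      have hδsn : δ * Real.sqrt n = (k : ℝ) := div_mul_cancel₀ _ hn0.ne'
      have hδr : δ < r := by
        rw [hδdef, div_lt_iff₀ hn0]
        linarith [hω']
      set t : ℝ := δ / r with htdef
      have ht0 : 0 < t := div_pos hδpos hrpos
      have ht1 : t ≤ 1 := by
        rw [htdef, div_le_one hrpos]; linarith
      have htr : t * r = δ := div_mul_cancel₀ _ hrpos.ne'
      have hwhatS := hwhatΔ n p ω
      have hwPS := hwP p
      have hsum0 : ∑ jj, u jj = 0 := by
        have : ∑ jj, u jj = (∑ jj, what n p ω jj) - ∑ jj, wP p jj := by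
          simp [hu, Finset.sum_sub_distrib]
        rw [this, hwhatS.2, hwPS.2, sub_self]
      have hmem : ∀ s : ℝ, 0 ≤ s → s ≤ 1 → wP p + s • u ∈ simplex K := by
        intro s hs0 hs1
        constructor
        · intro jj
          have h1 := hwPS.1 jj
          have h2 := hwhatS.1 jj
          have he : (wP p + s • u) jj = (1 - s) * wP p jj + s * what n p ω jj := by
            simp [hu, Pi.add_apply, Pi.smul_apply, Pi.sub_apply, smul_eq_mul]
            ring
          rw [he]
          have := mul_nonneg hs0 h2
          have := mul_nonneg (by linarith : (0:ℝ) ≤ 1 - s) h1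
          linarith
        · calc ∑ jj, (wP p + s • u) jj = ∑ jj, (wP p jj + s * u jj) := by
                simp [Pi.add_apply, Pi.smul_apply, smul_eq_mul]
          _ = (∑ jj, wP p jj) + s * ∑ jj, u jj := by
                rw [Finset.sum_add_distrib, Finset.mul_sum]
          _ = 1 := by rw [hwPS.2, hsum0]; ring
      have hnorm : ∀ s : ℝ, 0 ≤ s → euclidNorm (wP p + s • u - wP p) = s * r := by
        intro s hs
        have he : wP p + s • u - wP p = s • u := by abel
        rw [he, hrdef]
        unfold euclidNorm
        have hsq : ∑ jj, ((s • u) jj) ^ 2 = s ^ 2 * ∑ jj, (u jj) ^ 2 := by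
          simp [Pi.smul_apply, smul_eq_mul, mul_pow, Finset.mul_sum]
        rw [hsq, Real.sqrt_mul (sq_nonneg s), Real.sqrt_sq hs]
      obtain ⟨Q, L, hDexp⟩ : ∃ Q L : ℝ, ∀ s : ℝ,
          (Mhat n p ω (wP p + s • u) - M p (wP p + s • u)) -
            (Mhat n p ω (wP p) - M p (wP p)) = Q * s ^ 2 + L * s := by
        refine ⟨u ⬝ᵥ (Hhat n p ω *ᵥ u) - u ⬝ᵥ (H p *ᵥ u),
          (u ⬝ᵥ (Hhat n p ω *ᵥ wP p) + wP p ⬝ᵥ (Hhat n p ω *ᵥ u)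
            - u ⬝ᵥ (H p *ᵥ wP p) - wP p ⬝ᵥ (H p *ᵥ u)
            - 2 * (hhat n p ω ⬝ᵥ u) + 2 * (h p ⬝ᵥ u)), fun s => ?_⟩
        simp only [hMhat, hM, Matrix.mulVec_add, Matrix.mulVec_smul,
          dotProduct_add, add_dotProduct,
          smul_dotProduct, dotProduct_smul, smul_eq_mul]
        ring
      obtain ⟨aM, bM, hMexp, haMlb⟩ : ∃ a b : ℝ,
          (∀ s : ℝ, M p (wP p + s • u) - M p (wP p) = a * s ^ 2 + b * s) ∧
            η * r ^ 2 ≤ a := by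
        refine ⟨u ⬝ᵥ (H p *ᵥ u),
          (u ⬝ᵥ (H p *ᵥ wP p) + wP p ⬝ᵥ (H p *ᵥ u) - 2 * (h p ⬝ᵥ u)),
          fun s => ?_, ?_⟩
        · simp only [hM, Matrix.mulVec_add, Matrix.mulVec_smul,
            dotProduct_add, add_dotProduct,
            smul_dotProduct, dotProduct_smul, smul_eq_mul]
          ring
        · have := hHlb p u
          have hsq : r ^ 2 = ∑ jj, (u jj) ^ 2 := by
            rw [hrdef]
            unfold euclidNorm
            exact Real.sq_sqrt (by positivity)
          rw [hsq]
          exact this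
      have haMpos : 0 < aM := lt_of_lt_of_le (by positivity) haMlb
      have hbM0 : 0 ≤ bM := by
        by_contra hneg
        push_neg at hneg
        set s : ℝ := min 1 (-bM / (2 * aM)) with hs
        have hs0 : 0 < s :=
          lt_min one_pos (div_pos (neg_pos.2 hneg) (by linarith))
        have hs1 : s ≤ 1 := min_le_left _ _
        have hMge := hwPmin p _ (hmem s hs0.le hs1)
        have h2 : 0 ≤ aM * s ^ 2 + bM * s := by
          have := hMexp s; linarith
        have h3 : s ≤ -bM / (2 * aM) := min_le_right _ _
        have h4 : aM * s ≤ -bM / 2 := by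
          have h5 := mul_le_mul_of_nonneg_left h3 haMpos.le
          have h6 : aM * (-bM / (2 * aM)) = -bM / 2 := by
            field_simp
          linarith [h5, h6.ge]
        have h7 : aM * s + bM ≤ bM / 2 := by linarith
        have h8 : s * (aM * s + bM) ≤ s * (bM / 2) :=
          mul_le_mul_of_nonneg_left h7 hs0.le
        nlinarith [mul_pos hs0 (neg_pos.2 hneg)]
      have hmin1 : aM + bM ≤ |Q + L| := by
        have h1 := hmin (wP p) hwPS
        have e1 : wP p + (1:ℝ) • u = what n p ω := by
          rw [hu]; simp
        have e2 := hDexp 1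
        have e3 := hMexp 1
        rw [e1] at e2 e3
        norm_num at e2 e3
        have habs := neg_abs_le (Q + L)
        linarith [e2, e3, h1, habs]
      -- equicontinuity bounds at scales t and t/2
      have hmemt := hmem t ht0.le ht1
      have hmemt2 := hmem (t/2) (by linarith) (by linarith)
      have hnt : euclidNorm (wP p + t • u - wP p) = δ := by rw [hnorm t ht0.le, htr]
      have hnt2 : euclidNorm (wP p + (t/2) • u - wP p) = δ / 2 := by
        rw [hnorm (t/2) (by linarith)]
        rw [← htr]; ring
      have hb1 := hbad _ hmemt (le_of_eq hnt)
      have hb2 := hbad _ hmemt2 (by rw [hnt2]; linarith)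
      rw [hDexp t] at hb1
      rw [hDexp (t/2)] at hb2
      set T : ℝ := η * (k : ℝ) / 12 * ((k : ℝ) / Real.sqrt n) / Real.sqrt n with hT
      have hT0 : 0 < T := by
        rw [hT]
        have : (0:ℝ) < η * (k : ℝ) / 12 := by positivity
        positivity
      obtain ⟨l1, r1⟩ := abs_le.mp hb1
      obtain ⟨l2, r2⟩ := abs_le.mp hb2
      have e4 : Q * (t/2) ^ 2 + L * (t/2) = (Q * t ^ 2) / 4 + (L * t) / 2 := by ring
      rw [e4] at l2 r2
      have hQub : Q * t ^ 2 ≤ 6 * T := by linarith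
      have hQlb : -(6 * T) ≤ Q * t ^ 2 := by linarith
      have hLub : L * t ≤ 5 * T := by linarith
      have hLlb : -(5 * T) ≤ L * t := by linarith
      have hLt2ub : L * t ^ 2 ≤ 5 * T := by
        nlinarith [mul_le_mul_of_nonneg_right hLub ht0.le,
          mul_le_mul_of_nonneg_left ht1 hT0.le]
      have hLt2lb : -(5 * T) ≤ L * t ^ 2 := by
        nlinarith [mul_le_mul_of_nonneg_right hLlb ht0.le,
          mul_le_mul_of_nonneg_left ht1 hT0.le]
      have h5 : η * r ^ 2 ≤ |Q + L| := by linarith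
      have hfin : η * δ ^ 2 ≤ 11 * T := by
        have hrt : η * δ ^ 2 = η * r ^ 2 * t ^ 2 := by
          rw [← htr]; ring
        rcases abs_cases (Q + L) with ⟨heq, _⟩ | ⟨heq, _⟩
        · have h6 := mul_le_mul_of_nonneg_right (heq ▸ h5) (sq_nonneg t)
          have he : (Q + L) * t ^ 2 = Q * t ^ 2 + L * t ^ 2 := by ring
          rw [he] at h6
          rw [hrt]; linarith
        · have h6 := mul_le_mul_of_nonneg_right (heq ▸ h5) (sq_nonneg t)
          have he : -(Q + L) * t ^ 2 = -(Q * t ^ 2) - L * t ^ 2 := by ring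
          rw [he] at h6
          rw [hrt]; linarith
      -- final contradiction
      have hTval : 11 * T * Real.sqrt n = 11 * (η * (k : ℝ) / 12 * δ) := by
        rw [hT, hδdef]
        have hne := hn0.ne'
        field_simp
      have h9 := mul_le_mul_of_nonneg_right hfin hn0.le
      have h10 : η * δ * (k : ℝ) ≤ 11 * (η * (k : ℝ) / 12 * δ) := by
        calc η * δ * (k : ℝ) = η * δ * (δ * Real.sqrt n) := by rw [hδsn]
        _ = η * δ ^ 2 * Real.sqrt n := by ring
        _ ≤ 11 * T * Real.sqrt n := h9
        _ = 11 * (η * (k : ℝ) / 12 * δ) := hTval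
      nlinarith [mul_pos (mul_pos hη hδpos) hkpos']
    exact le_trans (measure_mono hsub)
      (le_trans (measure_union_le _ _) (le_of_eq (by rw [hnull, add_zero])))
  -- assemble
  rw [ENNReal.tendsto_nhds_zero]
  intro ε hε
  have hmne0 : min ε 1 ≠ 0 := (lt_min hε zero_lt_one).ne'
  have hmnetop : min ε 1 ≠ ⊤ := ne_top_of_le_ne_top ENNReal.one_ne_top (min_le_right _ _)
  have hε' : 0 < (min ε 1).toReal := ENNReal.toReal_pos hmne0 hmnetop
  obtain ⟨k, hk, hev⟩ := key _ hε'
  rw [eventually_atTop]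
  refine ⟨(k : ℝ), fun Mc hMc => ?_⟩
  have hevent : ∀ᶠ n in atTop,
      (⨆ p, μ n p {ω | Mc < Real.sqrt n * euclidNorm (what n p ω - wP p)})
        ≤ ENNReal.ofReal (min ε 1).toReal := by
    filter_upwards [hev] with n hn
    refine le_trans (iSup_mono fun p => measure_mono fun ω hω => ?_) hn
    exact lt_of_le_of_lt hMc hω
  refine le_trans (Filter.limsup_le_of_le (by isBoundedDefault) hevent) ?_
  rw [ENNReal.ofReal_toReal hmnetop]
  exact min_le_left _ _
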